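/- Local maximum principle for nonpositive superharmonic functions (Lemma 6.1). Let U ⊆ ℝ^d be a bounded open set and let ψ : U → ℝ be a locally integrable superharmonic function with ψ ≤ 0 on U. Then for every r > 0 and every p > 0 there exists a constant C = C(d, p, r, U), independent of ψ, such that for every x₀ with the closed ball B(x₀, 2r) contained in U, one has sup_{x ∈ B(x₀,r)} |ψ(x)| ≤ C · ( (1/|B(x₀,2r)|) ∫_{B(x₀,2r)} |ψ(y)|^p dy )^{1/p}. -/

import Mathlib

open MeasureTheory Metric Set

noncomputable def laplacian {d : ℕ} (f : EuclideanSpace ℝ (Fin d) → ℝ)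
    (x : EuclideanSpace ℝ (Fin d)) : ℝ :=
  ∑ i : Fin d, iteratedFDeriv ℝ 2 f x
    ![EuclideanSpace.single i (1:ℝ), EuclideanSpace.single i (1:ℝ)]

/-- A function is superharmonic on an open set `U` if it is lower semicontinuous on `U`
and satisfies the super-mean-value property on every closed ball contained in `U`. -/
def Superharmonic {d : ℕ} (U : Set (EuclideanSpace ℝ (Fin d)))
    (ψ : EuclideanSpace ℝ (Fin d) → ℝ) : Prop :=
  LowerSemicontinuousOn ψ U ∧
  ∀ x ∈ U, ∀ ρ : ℝ, 0 < ρ → closedBall x ρ ⊆ U →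
    ⨍ y in closedBall x ρ, ψ y ≤ ψ x

/-- A lower semicontinuous function on an open set is bounded below on compact subsets. -/
lemma lsc_bddBelow {d : ℕ} {U K : Set (EuclideanSpace ℝ (Fin d))}
    {ψ : EuclideanSpace ℝ (Fin d) → ℝ} (hUopen : IsOpen U)
    (hψ : LowerSemicontinuousOn ψ U) (hK : IsCompact K) (hKU : K ⊆ U) :
    ∃ m : ℝ, ∀ y ∈ K, m ≤ ψ y := by
  have hnb : ∀ x ∈ K, {z | ψ x - 1 < ψ z} ∈ nhds x := by
    intro x hx
    have h1 : LowerSemicontinuousWithinAt ψ U x := hψ x (hKU hx)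
    have h2 : ∀ᶠ z in nhdsWithin x U, ψ x - 1 < ψ z := h1 (ψ x - 1) (by linarith)
    rwa [nhdsWithin_eq_nhds.2 (hUopen.mem_nhds (hKU hx))] at h2
  obtain ⟨t, _, hcov⟩ := hK.elim_nhds_subcover (fun x => {z | ψ x - 1 < ψ z}) hnb
  rcases t.eq_empty_or_nonempty with h | h
  · exact ⟨0, fun y hy => absurd (hcov hy) (by simp [h])⟩
  · refine ⟨t.inf' h fun x => ψ x - 1, fun y hy => ?_⟩
    obtain ⟨x, hxt, hyx⟩ := mem_iUnion₂.1 (hcov hy)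
    exact le_trans (Finset.inf'_le _ hxt) (le_of_lt hyx)

/-- A nonpositive lower semicontinuous function has bounded absolute value on compacts. -/
lemma abs_bound {d : ℕ} {U K : Set (EuclideanSpace ℝ (Fin d))}
    {ψ : EuclideanSpace ℝ (Fin d) → ℝ} (hUopen : IsOpen U)
    (hψ : LowerSemicontinuousOn ψ U) (hK : IsCompact K) (hKU : K ⊆ U)
    (hneg : ∀ x ∈ U, ψ x ≤ 0) :
    ∃ m : ℝ, 0 ≤ m ∧ ∀ y ∈ K, |ψ y| ≤ m := by
  obtain ⟨m₀, hm₀⟩ := lsc_bddBelow hUopen hψ hK hKU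
  refine ⟨max 0 (-m₀), le_max_left _ _, fun y hy => ?_⟩
  rw [abs_of_nonpos (hneg y (hKU hy))]
  exact le_trans (neg_le_neg (hm₀ y hy)) (le_max_right _ _)

/-- `|ψ|^p` is integrable on a measurable set of finite measure on which `|ψ|` is bounded. -/
lemma intP {d : ℕ} {ψ : EuclideanSpace ℝ (Fin d) → ℝ} {K : Set (EuclideanSpace ℝ (Fin d))}
    (hKm : MeasurableSet K) (hfin : volume K ≠ ⊤)
    (hmeas : AEStronglyMeasurable (fun y => |ψ y|) (volume.restrict K))
    {m : ℝ} (hm : ∀ y ∈ K, |ψ y| ≤ m) {p : ℝ} (hp : 0 < p) :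
    IntegrableOn (fun y => |ψ y| ^ p) K := by
  have hcont : Continuous fun t : ℝ => t ^ p :=
    continuous_iff_continuousAt.2 fun x => Real.continuousAt_rpow_const x p (Or.inr hp.le)
  refine Integrable.mono'
    ((integrableOn_const hfin) :
      IntegrableOn (fun _ => m ^ p) K volume)
    (hcont.comp_aestronglyMeasurable hmeas) ?_
  refine (ae_restrict_iff' hKm).2 (Filter.Eventually.of_forall fun y hy => ?_)
  rw [Real.norm_eq_abs, abs_of_nonneg (Real.rpow_nonneg (abs_nonneg _) _)]
  exact Real.rpow_le_rpow (abs_nonneg _) (hm y hy) hp.le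

/-- Core estimate, for exponents `0 < p ≤ 1`. -/
lemma core_lemma {d : ℕ}
    (U : Set (EuclideanSpace ℝ (Fin d))) (hUopen : IsOpen U)
    (r p : ℝ) (hr : 0 < r) (hp : 0 < p) (hp1 : p ≤ 1) :
    ∃ C : ℝ, 0 < C ∧
      ∀ ψ : EuclideanSpace ℝ (Fin d) → ℝ,
        LocallyIntegrableOn ψ U → Superharmonic U ψ → (∀ x ∈ U, ψ x ≤ 0) →
        ∀ x₀ : EuclideanSpace ℝ (Fin d), closedBall x₀ (2 * r) ⊆ U →
          ∀ x ∈ closedBall x₀ r,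
            |ψ x| ≤ C * (⨍ y in closedBall x₀ (2 * r), |ψ y| ^ p) ^ (1 / p) := by
  have h2r : (0:ℝ) < 2 * r := by linarith
  set c : ℝ := (volume (closedBall (0 : EuclideanSpace ℝ (Fin d)) 1)).toReal with hc_def
  have hc : 0 < c :=
    ENNReal.toReal_pos (measure_closedBall_pos _ _ one_pos).ne' measure_closedBall_lt_top.ne
  set α : ℝ := (d : ℝ) / p with hα_def
  have hα : 0 ≤ α := div_nonneg (Nat.cast_nonneg d) hp.le
  have hαp : α * p = (d : ℝ) := div_mul_cancel₀ _ hp.ne'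
  set C₁ : ℝ := 2 ^ α / c with hC₁_def
  have hC₁ : 0 < C₁ := div_pos (Real.rpow_pos_of_pos two_pos α) hc
  have hrα : 0 < r ^ α := Real.rpow_pos_of_pos hr α
  have hv : (0:ℝ) < (2*r)^d * c := by positivity
  refine ⟨(C₁ ^ (1/p) * ((2*r)^d * c) ^ (1/p)) / r ^ α,
    div_pos (mul_pos (Real.rpow_pos_of_pos hC₁ _) (Real.rpow_pos_of_pos hv _)) hrα, ?_⟩
  rintro ψ hloc ⟨hlsc, hmean⟩ hneg x₀ hKU x hx
  have hK : IsCompact (closedBall x₀ (2*r)) := isCompact_closedBall _ _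
  have hKmeas : MeasurableSet (closedBall x₀ (2*r)) := measurableSet_closedBall
  have hKfin : volume (closedBall x₀ (2*r)) ≠ ⊤ := measure_closedBall_lt_top.ne
  have hIntOn : IntegrableOn ψ (closedBall x₀ (2*r)) := hloc.integrableOn_compact_subset hKU hK
  have habs : IntegrableOn (fun y => |ψ y|) (closedBall x₀ (2*r)) := hIntOn.abs
  obtain ⟨m, hm0, hm⟩ := abs_bound hUopen hlsc hK hKU hneg
  have hIntP : IntegrableOn (fun y => |ψ y| ^ p) (closedBall x₀ (2*r)) :=
    intP hKmeas hKfin habs.aestronglyMeasurable hm hp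
  set I : ℝ := ∫ y in closedBall x₀ (2*r), |ψ y| ^ p with hI_def
  have hI0 : 0 ≤ I :=
    setIntegral_nonneg hKmeas fun y _ => Real.rpow_nonneg (abs_nonneg _) _
  -- mean value estimate
  have keyA : ∀ y ∈ U, ∀ ρ : ℝ, 0 < ρ → closedBall y ρ ⊆ U →
      |ψ y| ≤ (volume (closedBall y ρ)).toReal⁻¹ * ∫ z in closedBall y ρ, |ψ z| := by
    intro y hy ρ hρ hsub
    have h1 := hmean y hy ρ hρ hsub
    rw [setAverage_eq] at h1
    have h2 : ∫ z in closedBall y ρ, ψ z = - ∫ z in closedBall y ρ, |ψ z| := by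
      rw [← integral_neg]
      exact setIntegral_congr_fun measurableSet_closedBall fun z hz => by
        simp [abs_of_nonpos (hneg z (hsub hz))]
    rw [h2, smul_eq_mul, mul_neg] at h1
    rw [abs_of_nonpos (hneg y hy)]
    rw [measureReal_def] at h1
    linarith
  -- pointwise interpolation trick
  have trick : ∀ a M : ℝ, 0 ≤ a → a ≤ M → a ≤ M ^ (1-p) * a ^ p := by
    intro a M ha haM
    rcases ha.eq_or_lt with h0 | hpos
    · rw [← h0, Real.zero_rpow hp.ne', mul_zero]
    · calc a = a ^ (1-p) * a ^ p := by
            rw [← Real.rpow_add hpos]; norm_num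
        _ ≤ M ^ (1-p) * a ^ p :=
            mul_le_mul_of_nonneg_right (Real.rpow_le_rpow ha haM (by linarith))
              (Real.rpow_nonneg ha _)
  -- the weight function and its supremum
  set w : EuclideanSpace ℝ (Fin d) → ℝ := fun y => (2*r - dist y x₀) ^ α * |ψ y| with hw_def
  have hδK : ∀ y ∈ closedBall x₀ (2*r), 0 ≤ 2*r - dist y x₀ := by
    intro y hy
    have := mem_closedBall.1 hy
    linarith
  have hbdd : BddAbove (w '' closedBall x₀ (2*r)) := by
    refine ⟨(2*r) ^ α * m, ?_⟩
    rintro _ ⟨y, hy, rfl⟩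
    have h1 : 2*r - dist y x₀ ≤ 2*r := by
      have := dist_nonneg (x := y) (y := x₀); linarith
    exact mul_le_mul (Real.rpow_le_rpow (hδK y hy) h1 hα) (hm y hy) (abs_nonneg _)
      (Real.rpow_nonneg h2r.le _)
  set S : ℝ := sSup (w '' closedBall x₀ (2*r)) with hS_def
  have hx₀K : x₀ ∈ closedBall x₀ (2*r) := mem_closedBall_self h2r.le
  have hS0 : 0 ≤ S := by
    refine le_trans ?_ (le_csSup hbdd (mem_image_of_mem w hx₀K))
    exact mul_nonneg (Real.rpow_nonneg (hδK _ hx₀K) _) (abs_nonneg _)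
  -- the key self-improving bound
  have hkey : ∀ y ∈ closedBall x₀ (2*r), w y ≤ C₁ * S ^ (1-p) * I := by
    intro y hy
    have hy0 : 0 ≤ 2*r - dist y x₀ := hδK y hy
    have hRHS0 : 0 ≤ C₁ * S ^ (1-p) * I :=
      mul_nonneg (mul_nonneg hC₁.le (Real.rpow_nonneg hS0 _)) hI0
    rcases hy0.eq_or_lt with hδ0 | hδpos
    · -- boundary case : the weight vanishes
      have hd : d ≠ 0 := by
        rintro rfl
        haveI : Subsingleton (EuclideanSpace ℝ (Fin 0)) := ⟨fun a b => PiLp.ext fun i => i.elim0⟩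
        rw [Subsingleton.elim y x₀, dist_self] at hδ0
        simp at hδ0
        linarith
      have hαpos : 0 < α := div_pos (by exact_mod_cast Nat.pos_of_ne_zero hd) hp
      have hw0 : w y = 0 := by
        simp only [hw_def, ← hδ0, Real.zero_rpow hαpos.ne', zero_mul]
      rw [hw0]; exact hRHS0
    · set ρ : ℝ := (2*r - dist y x₀) / 2 with hρ_def
      have hρ : 0 < ρ := half_pos hδpos
      have hδy : 2*r - dist y x₀ = 2 * ρ := by rw [hρ_def]; ring
      have hsubK : closedBall y ρ ⊆ closedBall x₀ (2*r) := by
        intro z hz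
        have h1 : dist z y ≤ ρ := mem_closedBall.1 hz
        have h2 := dist_triangle z y x₀
        rw [mem_closedBall]
        linarith
      have hδz : ∀ z ∈ closedBall y ρ, ρ ≤ 2*r - dist z x₀ := by
        intro z hz
        have h1 : dist z y ≤ ρ := mem_closedBall.1 hz
        have h2 := dist_triangle z y x₀
        linarith
      have hρα : 0 < ρ ^ α := Real.rpow_pos_of_pos hρ α
      have hρd : 0 < ρ ^ (d:ℝ) := Real.rpow_pos_of_pos hρ _
      set M : ℝ := S / ρ ^ α with hM_def
      have hMbound : ∀ z ∈ closedBall y ρ, |ψ z| ≤ M := by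
        intro z hz
        have hzK := hsubK hz
        have h1 : w z ≤ S := le_csSup hbdd (mem_image_of_mem w hzK)
        have h2 : ρ ^ α * |ψ z| ≤ w z :=
          mul_le_mul_of_nonneg_right (Real.rpow_le_rpow hρ.le (hδz z hz) hα) (abs_nonneg _)
        rw [hM_def, le_div_iff₀ hρα]
        calc |ψ z| * ρ ^ α = ρ ^ α * |ψ z| := mul_comm _ _
          _ ≤ w z := h2
          _ ≤ S := h1
      have hM0 : 0 ≤ M := div_nonneg hS0 hρα.le
      have hyU : y ∈ U := hKU hy
      have hsubU : closedBall y ρ ⊆ U := hsubK.trans hKU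
      have step1 := keyA y hyU ρ hρ hsubU
      have step2 : ∫ z in closedBall y ρ, |ψ z| ≤ M ^ (1-p) * I := by
        have e1 : ∫ z in closedBall y ρ, |ψ z|
            ≤ ∫ z in closedBall y ρ, M ^ (1-p) * |ψ z| ^ p :=
          setIntegral_mono_on (habs.mono_set hsubK) ((hIntP.mono_set hsubK).const_mul _)
            measurableSet_closedBall (fun z hz => trick _ _ (abs_nonneg _) (hMbound z hz))
        have e2 : ∫ z in closedBall y ρ, M ^ (1-p) * |ψ z| ^ p
            = M ^ (1-p) * ∫ z in closedBall y ρ, |ψ z| ^ p := integral_const_mul _ _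
        have e3 : ∫ z in closedBall y ρ, |ψ z| ^ p ≤ I :=
          setIntegral_mono_set hIntP
            (Filter.Eventually.of_forall fun z => Real.rpow_nonneg (abs_nonneg _) _)
            (HasSubset.Subset.eventuallyLE hsubK)
        calc ∫ z in closedBall y ρ, |ψ z| ≤ _ := e1
          _ = M ^ (1-p) * ∫ z in closedBall y ρ, |ψ z| ^ p := e2
          _ ≤ M ^ (1-p) * I :=
            mul_le_mul_of_nonneg_left e3 (Real.rpow_nonneg hM0 _)
      have hvolB : (volume (closedBall y ρ)).toReal = ρ ^ (d:ℝ) * c := by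
        rw [Measure.addHaar_closedBall' _ _ hρ.le, finrank_euclideanSpace_fin,
          ENNReal.toReal_mul, ENNReal.toReal_ofReal (by positivity), ← hc_def,
          ← Real.rpow_natCast ρ d]
      have step3 : |ψ y| ≤ (ρ ^ (d:ℝ) * c)⁻¹ * (M ^ (1-p) * I) := by
        calc |ψ y| ≤ (volume (closedBall y ρ)).toReal⁻¹ * ∫ z in closedBall y ρ, |ψ z| :=
              step1
          _ ≤ (volume (closedBall y ρ)).toReal⁻¹ * (M ^ (1-p) * I) := by
              refine mul_le_mul_of_nonneg_left step2 ?_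
              positivity
          _ = (ρ ^ (d:ℝ) * c)⁻¹ * (M ^ (1-p) * I) := by rw [hvolB]
      have final_eq : (2*ρ) ^ α * ((ρ ^ (d:ℝ) * c)⁻¹ * ((S / ρ ^ α) ^ (1-p) * I))
          = C₁ * S ^ (1-p) * I := by
        have e2 : (ρ ^ α) ^ (1-p) = ρ ^ (α - (d:ℝ)) := by
          rw [← Real.rpow_mul hρ.le]
          congr 1
          rw [mul_sub, mul_one, hαp]
        have e3 : ρ ^ α = ρ ^ (α - (d:ℝ)) * ρ ^ (d:ℝ) := by
          rw [← Real.rpow_add hρ]; ring_nf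
        have e4 : (0:ℝ) < ρ ^ (α - (d:ℝ)) := Real.rpow_pos_of_pos hρ _
        rw [Real.mul_rpow (by norm_num) hρ.le, Real.div_rpow hS0 hρα.le, e2, e3, hC₁_def]
        field_simp
      calc w y = (2*ρ) ^ α * |ψ y| := by rw [hw_def]; simp only []; rw [hδy]
        _ ≤ (2*ρ) ^ α * ((ρ ^ (d:ℝ) * c)⁻¹ * (M ^ (1-p) * I)) :=
            mul_le_mul_of_nonneg_left step3 (Real.rpow_nonneg (by positivity) _)
        _ = C₁ * S ^ (1-p) * I := by rw [hM_def]; exact final_eq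
  -- conclude S^p ≤ C₁ * I
  have hS_le : S ≤ C₁ * S ^ (1-p) * I := by
    refine csSup_le (Set.Nonempty.image w ⟨x₀, hx₀K⟩) ?_
    rintro _ ⟨y, hy, rfl⟩
    exact hkey y hy
  have hSp : S ^ p ≤ C₁ * I := by
    rcases hS0.eq_or_lt with h0 | hSpos
    · rw [← h0, Real.zero_rpow hp.ne']
      exact mul_nonneg hC₁.le hI0
    · have h1 : 0 < S ^ (1-p) := Real.rpow_pos_of_pos hSpos _
      have h2 : S ^ p * S ^ (1-p) = S := by
        rw [← Real.rpow_add hSpos]; norm_num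
      have h3 : S ^ p * S ^ (1-p) ≤ (C₁ * I) * S ^ (1-p) := by
        rw [h2]
        calc S ≤ C₁ * S ^ (1-p) * I := hS_le
          _ = (C₁ * I) * S ^ (1-p) := by ring
      exact le_of_mul_le_mul_right h3 h1
  have hS_le' : S ≤ (C₁ * I) ^ (1/p) := by
    have h1 := Real.rpow_le_rpow (Real.rpow_nonneg hS0 p) hSp (by positivity : (0:ℝ) ≤ 1/p)
    rwa [← Real.rpow_mul hS0, mul_one_div_cancel hp.ne', Real.rpow_one] at h1
  -- conclude for the point x
  have hxK : x ∈ closedBall x₀ (2*r) := closedBall_subset_closedBall (by linarith) hx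
  have hδx : r ≤ 2*r - dist x x₀ := by
    have := mem_closedBall.1 hx; linarith
  have h1 : r ^ α * |ψ x| ≤ S := by
    refine le_trans ?_ (le_csSup hbdd (mem_image_of_mem w hxK))
    exact mul_le_mul_of_nonneg_right (Real.rpow_le_rpow hr.le hδx hα) (abs_nonneg _)
  have h2 : |ψ x| ≤ (C₁ * I) ^ (1/p) / r ^ α := by
    rw [le_div_iff₀ hrα]
    calc |ψ x| * r ^ α = r ^ α * |ψ x| := mul_comm _ _
      _ ≤ S := h1
      _ ≤ (C₁ * I) ^ (1/p) := hS_le'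
  have hvolK : (volume (closedBall x₀ (2*r))).toReal = (2*r)^d * c := by
    rw [Measure.addHaar_closedBall' _ _ h2r.le, finrank_euclideanSpace_fin,
      ENNReal.toReal_mul, ENNReal.toReal_ofReal (by positivity), ← hc_def]
  have havg : ⨍ y in closedBall x₀ (2*r), |ψ y| ^ p = I / ((2*r)^d * c) := by
    rw [setAverage_eq, smul_eq_mul, measureReal_def, hvolK, ← hI_def, inv_mul_eq_div]
  have hRHS_eq : (C₁ ^ (1/p) * ((2*r)^d * c) ^ (1/p)) / r ^ α
      * (⨍ y in closedBall x₀ (2*r), |ψ y| ^ p) ^ (1/p) = (C₁ * I) ^ (1/p) / r ^ α := by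
    rw [havg, Real.div_rpow hI0 hv.le, Real.mul_rpow hC₁.le hI0]
    have hne : ((2*r)^d * c : ℝ) ^ (1/p) ≠ 0 := (Real.rpow_pos_of_pos hv _).ne'
    field_simp
  rw [hRHS_eq]
  exact h2

/-- **Local maximum principle for nonpositive superharmonic functions** (Lemma 6.1).
Let `U ⊆ ℝ^d` be a bounded open set and `ψ` a locally integrable superharmonic function on `U`
with `ψ ≤ 0` on `U`.  Then for every `r > 0` and `p > 0` there is a constant
`C = C(d, p, r, U)`, independent of `ψ`'s values, such that whenever the closed ball
`B(x₀, 2r)` is contained in `U`,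
`sup_{B(x₀,r)} |ψ| ≤ C ((1/|B(x₀,2r)|) ∫_{B(x₀,2r)} |ψ|^p)^{1/p}`. -/
theorem local_maximum_principle {d : ℕ}
    (U : Set (EuclideanSpace ℝ (Fin d))) (hUopen : IsOpen U) (hUbdd : Bornology.IsBounded U)
    (r p : ℝ) (hr : 0 < r) (hp : 0 < p) :
    ∃ C : ℝ, 0 < C ∧
      ∀ ψ : EuclideanSpace ℝ (Fin d) → ℝ,
        LocallyIntegrableOn ψ U → Superharmonic U ψ → (∀ x ∈ U, ψ x ≤ 0) →
        ∀ x₀ : EuclideanSpace ℝ (Fin d), closedBall x₀ (2 * r) ⊆ U →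
          ∀ x ∈ closedBall x₀ r,
            |ψ x| ≤ C * (⨍ y in closedBall x₀ (2 * r), |ψ y| ^ p) ^ (1 / p) := by
  rcases le_or_gt p 1 with hp1 | hp1
  · exact core_lemma U hUopen r p hr hp hp1
  · obtain ⟨C₁, hC₁, hcore⟩ := core_lemma U hUopen r 1 hr one_pos le_rfl
    refine ⟨C₁, hC₁, ?_⟩
    intro ψ hloc hsuper hneg x₀ hKU x hx
    have h2r : (0:ℝ) < 2 * r := by linarith
    have hbase := hcore ψ hloc hsuper hneg x₀ hKU x hx
    simp only [Real.rpow_one] at hbase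
    norm_num at hbase
    -- hbase : |ψ x| ≤ C₁ * ⨍ y in closedBall x₀ (2*r), |ψ y|
    have hK : IsCompact (closedBall x₀ (2*r)) := isCompact_closedBall _ _
    have hKmeas : MeasurableSet (closedBall x₀ (2*r)) := measurableSet_closedBall
    have hKfin : volume (closedBall x₀ (2*r)) ≠ ⊤ := measure_closedBall_lt_top.ne
    have hK0 : volume (closedBall x₀ (2*r)) ≠ 0 := (measure_closedBall_pos _ _ h2r).ne'
    have hIntOn : IntegrableOn ψ (closedBall x₀ (2*r)) := hloc.integrableOn_compact_subset hKU hK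
    have habs : IntegrableOn (fun y => |ψ y|) (closedBall x₀ (2*r)) := hIntOn.abs
    obtain ⟨m, hm0, hm⟩ := abs_bound hUopen hsuper.1 hK hKU hneg
    have hIntP : IntegrableOn (fun y => |ψ y| ^ p) (closedBall x₀ (2*r)) :=
      intP hKmeas hKfin habs.aestronglyMeasurable hm hp
    have hcont : Continuous fun t : ℝ => t ^ p :=
      continuous_iff_continuousAt.2 fun z => Real.continuousAt_rpow_const z p (Or.inr hp.le)
    have hjen : (⨍ y in closedBall x₀ (2*r), |ψ y|) ^ p
        ≤ ⨍ y in closedBall x₀ (2*r), |ψ y| ^ p := by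
      have := (convexOn_rpow hp1.le).map_set_average_le hcont.continuousOn isClosed_Ici
        hK0 hKfin (Filter.Eventually.of_forall fun y => abs_nonneg (ψ y)) habs hIntP
      exact this
    have ht0 : 0 ≤ ⨍ y in closedBall x₀ (2*r), |ψ y| := by
      rw [setAverage_eq, smul_eq_mul]
      exact mul_nonneg (by positivity)
        (setIntegral_nonneg hKmeas fun y _ => abs_nonneg _)
    have h2 : ⨍ y in closedBall x₀ (2*r), |ψ y|
        ≤ (⨍ y in closedBall x₀ (2*r), |ψ y| ^ p) ^ (1/p) := by
      have h3 := Real.rpow_le_rpow (Real.rpow_nonneg ht0 p) hjen (by positivity : (0:ℝ) ≤ 1/p)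
      rwa [← Real.rpow_mul ht0, mul_one_div_cancel (by linarith : p ≠ 0), Real.rpow_one] at h3
    calc |ψ x| ≤ C₁ * ⨍ y in closedBall x₀ (2*r), |ψ y| := hbase
      _ ≤ C₁ * (⨍ y in closedBall x₀ (2*r), |ψ y| ^ p) ^ (1/p) :=
          mul_le_mul_of_nonneg_left h2 hC₁.le
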